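/- Fix α ∈ (0,1), constants κ, L_F, c, S > 0, and a constant C ≥ 0 (representing Σ_{j≠i} σ_j^{-2} from the other clients). Define J : (0,∞) → ℝ by J(σ) = (1−α)·κ·Δ(σ)·(1 + Δ(σ)/(2 L_F)) + α·c·S/σ, where Δ(σ) = (σ^{-2} + C)^{-1/2}. If J attains a local minimum at some σ̂ > 0, then σ̂ satisfies the first-order equilibrium condition κ·(1−α)·(σ̂^{-2} + C)^{-3/2}·((σ̂^{-2} + C)^{-1/2} + L_F)/L_F = α·c·S·σ̂. -/

import Mathlib

/-- If the individual cost `J(σ) = (1−α)·κ·Δ(σ)·(1 + Δ(σ)/(2L_F)) + α·c·S/σ`, with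
`Δ(σ) = (σ^{-2} + C)^{-1/2}`, attains a local minimum on `(0,∞)` at `σh > 0`, then `σh`
satisfies the first-order equilibrium condition
`κ·(1−α)·(σh^{-2}+C)^{-3/2}·((σh^{-2}+C)^{-1/2} + L_F)/L_F = α·c·S·σh`. -/
theorem stmt_4 (α κ L_F c S C : ℝ) (hα : 0 < α) (hα1 : α < 1) (hκ : 0 < κ)
    (hL : 0 < L_F) (hc : 0 < c) (hS : 0 < S) (hC : 0 ≤ C)
    (J : ℝ → ℝ)
    (hJ : ∀ σ, J σ = (1 - α) * κ * (((σ ^ 2)⁻¹ + C) ^ (-(1 / 2) : ℝ)) *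
        (1 + (((σ ^ 2)⁻¹ + C) ^ (-(1 / 2) : ℝ)) / (2 * L_F)) + α * c * S / σ)
    (σh : ℝ) (hσh : 0 < σh) (hmin : IsLocalMinOn J (Set.Ioi (0 : ℝ)) σh) :
    κ * (1 - α) * (((σh ^ 2)⁻¹ + C) ^ (-(3 / 2) : ℝ)) *
      ((((σh ^ 2)⁻¹ + C) ^ (-(1 / 2) : ℝ)) + L_F) / L_F = α * c * S * σh := by
  have hσ2 : (0:ℝ) < σh ^ 2 := by positivity
  set t : ℝ := (σh ^ 2)⁻¹ + C with ht
  have htpos : 0 < t := by positivity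
  set p : ℝ := t ^ (-(1 / 2) : ℝ) with hp
  set q : ℝ := t ^ (-(3 / 2) : ℝ) with hq
  have hexp : ((-(1/2) : ℝ) - 1) = (-(3/2) : ℝ) := by norm_num
  -- derivative of inner function
  have hu : HasDerivAt (fun σ : ℝ => (σ ^ 2)⁻¹ + C) (-(2 * σh) / (σh ^ 2) ^ 2) σh := by
    have h1 : HasDerivAt (fun σ : ℝ => σ ^ 2) (2 * σh) σh := by
      simpa using hasDerivAt_pow 2 σh
    simpa using (h1.inv hσ2.ne').add_const C
  have hg : HasDerivAt (fun σ : ℝ => ((σ ^ 2)⁻¹ + C) ^ (-(1 / 2) : ℝ))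
      ((-(1/2) : ℝ) * q * (-(2 * σh) / (σh ^ 2) ^ 2)) σh := by
    have h := (Real.hasDerivAt_rpow_const (p := (-(1/2) : ℝ)) (Or.inl htpos.ne')).comp σh hu
    rw [hexp] at h
    simpa [← hq, mul_assoc, Function.comp_def] using h
  set g' : ℝ := (-(1/2) : ℝ) * q * (-(2 * σh) / (σh ^ 2) ^ 2) with hg'
  have hinv : HasDerivAt (fun σ : ℝ => α * c * S / σ) (α * c * S * (-(σh ^ 2)⁻¹)) σh := by
    simpa [div_eq_mul_inv] using (hasDerivAt_inv hσh.ne').const_mul (α * c * S)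
  have hJd : HasDerivAt J
      (((1 - α) * κ * g') * (1 + p / (2 * L_F)) +
        ((1 - α) * κ * p) * (g' / (2 * L_F)) + α * c * S * (-(σh ^ 2)⁻¹)) σh := by
    have hJeq : J = fun σ => (1 - α) * κ * (((σ ^ 2)⁻¹ + C) ^ (-(1 / 2) : ℝ)) *
        (1 + (((σ ^ 2)⁻¹ + C) ^ (-(1 / 2) : ℝ)) / (2 * L_F)) + α * c * S / σ := funext hJ
    rw [hJeq]
    exact ((hg.const_mul ((1 - α) * κ)).mul ((hg.div_const (2 * L_F)).const_add 1)).add hinv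
  have hlm : IsLocalMin J σh := hmin.isLocalMin (isOpen_Ioi.mem_nhds hσh)
  have hD0 := hlm.hasDerivAt_eq_zero hJd
  have hσ3 : σh ^ 3 ≠ 0 := by positivity
  have hLne : L_F ≠ 0 := hL.ne'
  rw [hg'] at hD0
  field_simp at hD0
  have h4 : (4 * σh ^ 3 : ℝ) ≠ 0 := by positivity
  have key : κ * (1 - α) * q * (p + L_F) * (4 * σh ^ 3) =
      α * c * S * σh * L_F * (4 * σh ^ 3) := by linear_combination (2 * σh ^ 3) * hD0
  have key2 : κ * (1 - α) * q * (p + L_F) = α * c * S * σh * L_F :=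
    mul_right_cancel₀ h4 key
  rw [div_eq_iff hLne]
  linarith [key2]
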